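/- arXiv:0901.4036 — 2 statements merged into one kernel-verified Lean document; each statement's English description precedes it below -/
import Mathlib

section
/- For all indices 1 ≤ i < j ≤ m, the search vectors satisfy the orthogonality relation a_iᵀ p_j = 0. -/
open Matrix

lemma vecMulVec_mulVec' {n : ℕ} (u v x : Fin n → ℝ) :
    (Matrix.vecMulVec u v).mulVec x = (v ⬝ᵥ x) • u := by
  ext k
  simp [Matrix.mulVec, Matrix.vecMulVec_apply, dotProduct, Finset.mul_sum,
    mul_comm, mul_assoc, mul_left_comm]

theorem abs_search_vector_orthogonality
    (m n : ℕ) (hm : 0 < m) (hmn : m ≤ n)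
    (a z w p : ℕ → (Fin n → ℝ))
    (H : ℕ → Matrix (Fin n) (Fin n) ℝ)
    (hH1 : IsUnit (H 1))
    (hz : ∀ i, 1 ≤ i → i ≤ m → z i ⬝ᵥ (H i).mulVec (a i) ≠ 0)
    (hw : ∀ i, 1 ≤ i → i ≤ m → w i ⬝ᵥ (H i).mulVec (a i) ≠ 0)
    (hrec : ∀ i, 1 ≤ i → i ≤ m →
      H (i + 1) = H i - (w i ⬝ᵥ (H i).mulVec (a i))⁻¹ •
        Matrix.vecMulVec ((H i).mulVec (a i)) (Matrix.vecMul (w i) (H i)))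
    (hp : ∀ i, 1 ≤ i → i ≤ m → p i = Matrix.mulVec (H i)ᵀ (z i)) :
    ∀ i j, 1 ≤ i → i < j → j ≤ m → a i ⬝ᵥ p j = 0 := by
  intro i j hi hij hjm
  have key : ∀ k, i < k → k ≤ m → (H k).mulVec (a i) = 0 := by
    intro k
    induction k with
    | zero => intro h; omega
    | succ k ih =>
      intro hik hkm
      have hkm' : k ≤ m := by omega
      rcases Nat.lt_or_ge i k with hik' | hik'
      · -- k > i : use ih and recursion
        have hik1 : 1 ≤ k := by omega
        have h0 : (H k).mulVec (a i) = 0 := ih hik' hkm'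
        rw [hrec k hik1 hkm']
        rw [Matrix.sub_mulVec, Matrix.smul_mulVec, vecMulVec_mulVec']
        have : Matrix.vecMul (w k) (H k) ⬝ᵥ a i = 0 := by
          rw [← Matrix.dotProduct_mulVec, h0, dotProduct_zero]
        rw [this, h0, zero_smul, smul_zero, sub_zero]
      · -- k = i
        have hki : k = i := by omega
        subst hki
        rw [hrec k (by omega) hkm']
        rw [Matrix.sub_mulVec, Matrix.smul_mulVec, vecMulVec_mulVec']
        have hdot : Matrix.vecMul (w k) (H k) ⬝ᵥ a k = w k ⬝ᵥ (H k).mulVec (a k) := by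
          rw [← Matrix.dotProduct_mulVec]
        rw [hdot]
        rw [smul_smul, inv_mul_cancel₀ (hw k (by omega) hkm'), one_smul, sub_self]
  rw [hp j (by omega) hjm]
  rw [Matrix.dotProduct_mulVec]
  rw [Matrix.vecMul_transpose, key j hij hjm, zero_dotProduct]
end

section
/- Proposition 4.6 (finite termination of ABS-S): the ABS-S algorithm terminates after m steps with a solution of the full stochastic system, i.e. the final iterate ξ_{m+1} satisfies A ξ_{m+1}(ω) = η(ω) for every ω ∈ Ω. -/
open Matrix MeasureTheory ProbabilityTheory

lemma vecMulVec_mulVec_aux {n : ℕ} (u v b : Fin n → ℝ) :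
    (Matrix.vecMulVec u v).mulVec b = (v ⬝ᵥ b) • u := by
  ext k
  simp [Matrix.mulVec, Matrix.vecMulVec, dotProduct, Finset.mul_sum, mul_comm, mul_assoc,
    mul_left_comm]

theorem absS_finite_termination
    (m n : ℕ) (hm : 0 < m) (hmn : m ≤ n)
    (a z w p : ℕ → (Fin n → ℝ))
    (H : ℕ → Matrix (Fin n) (Fin n) ℝ)
    (hH1 : IsUnit (H 1))
    (hz : ∀ i, 1 ≤ i → i ≤ m → z i ⬝ᵥ (H i).mulVec (a i) ≠ 0)
    (hw : ∀ i, 1 ≤ i → i ≤ m → w i ⬝ᵥ (H i).mulVec (a i) ≠ 0)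
    (hrec : ∀ i, 1 ≤ i → i ≤ m →
      H (i + 1) = H i - (w i ⬝ᵥ (H i).mulVec (a i))⁻¹ •
        Matrix.vecMulVec ((H i).mulVec (a i)) (Matrix.vecMul (w i) (H i)))
    (hp : ∀ i, 1 ≤ i → i ≤ m → p i = Matrix.mulVec (H i)ᵀ (z i))
    {Ω : Type*} [MeasurableSpace Ω] (P : Measure Ω) [IsProbabilityMeasure P]
    (η : ℕ → Ω → ℝ) (v : ℕ → ℝ)
    (hηmeas : ∀ i, Measurable (η i))
    (hηindep : iIndepFun η P)
    (hηlaw : ∀ i, 1 ≤ i → i ≤ m → Measure.map (η i) P = gaussianReal (v i) 1)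
    (ξ₁ : Fin n → ℝ)
    (ξ : ℕ → Ω → (Fin n → ℝ)) (τ α : ℕ → Ω → ℝ)
    (hξ1 : ξ 1 = fun _ => ξ₁)
    (hτ : ∀ i, 1 ≤ i → i ≤ m → ∀ ω, τ i ω = a i ⬝ᵥ ξ i ω - η i ω)
    (hα : ∀ i, 1 ≤ i → i ≤ m → ∀ ω, α i ω = τ i ω / (a i ⬝ᵥ p i))
    (hξ : ∀ i, 1 ≤ i → i ≤ m → ∀ ω, ξ (i + 1) ω = ξ i ω - α i ω • p i)
    (A : Matrix (Fin m) (Fin n) ℝ) (hA : ∀ k : Fin m, A k = a (k.1 + 1)) :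
    ∀ ω, A.mulVec (ξ (m + 1) ω) = fun k : Fin m => η (k.1 + 1) ω := by
  -- dot product with search vector
  have hap : ∀ i j, 1 ≤ j → j ≤ m → a i ⬝ᵥ p j = z j ⬝ᵥ (H j).mulVec (a i) := by
    intro i j hj1 hjm
    rw [hp j hj1 hjm, Matrix.mulVec_transpose, dotProduct_comm, ← Matrix.dotProduct_mulVec]
  -- H j annihilates a i for i < j
  have hH0 : ∀ i, 1 ≤ i → i ≤ m → ∀ j, i < j → j ≤ m + 1 →
      (H j).mulVec (a i) = 0 := by
    intro i hi1 him j
    induction j with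
    | zero => omega
    | succ j ih =>
      intro hij hjm
      rcases Nat.lt_or_ge i j with h | h
      · have hj1 : 1 ≤ j := by omega
        have hjm' : j ≤ m := by omega
        have h0 := ih h (by omega)
        rw [hrec j hj1 hjm', Matrix.sub_mulVec, h0, Matrix.smul_mulVec,
          vecMulVec_mulVec_aux, ← Matrix.dotProduct_mulVec, h0]
        simp
      · have hji : j = i := by omega
        subst hji
        rw [hrec j hi1 him, Matrix.sub_mulVec, Matrix.smul_mulVec,
          vecMulVec_mulVec_aux, ← Matrix.dotProduct_mulVec, smul_smul,
          inv_mul_cancel₀ (hw j hi1 him), one_smul, sub_self]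
  -- key invariant
  have key : ∀ i, 1 ≤ i → i ≤ m → ∀ j, i < j → j ≤ m + 1 → ∀ ω,
      a i ⬝ᵥ ξ j ω = η i ω := by
    intro i hi1 him j
    induction j with
    | zero => omega
    | succ j ih =>
      intro hij hjm ω
      rcases Nat.lt_or_ge i j with h | h
      · have hj1 : 1 ≤ j := by omega
        have hjm' : j ≤ m := by omega
        rw [hξ j hj1 hjm' ω, dotProduct_sub, dotProduct_smul, smul_eq_mul,
          hap i j hj1 hjm', hH0 i hi1 him j h (by omega)]
        simp [ih h (by omega) ω]
      · have hji : j = i := by omega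
        subst hji
        have hpi : a j ⬝ᵥ p j ≠ 0 := by
          rw [hap j j hi1 him]; exact hz j hi1 him
        rw [hξ j hi1 him ω, dotProduct_sub, dotProduct_smul, smul_eq_mul,
          hα j hi1 him ω, hτ j hi1 him ω, div_mul_cancel₀ _ hpi]
        ring
  intro ω
  funext k
  show A k ⬝ᵥ ξ (m + 1) ω = _
  rw [hA k]
  exact key (k.1 + 1) (by omega) (by omega) (m + 1) (by omega) le_rfl ω
end
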